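/- Let A and B be positive definite n×n complex matrices and define the relative operator entropy S(A|B) = A^(1/2) · log(A^(-1/2) B A^(-1/2)) · A^(1/2), where log is defined by functional calculus. Then S(A|B) = ∫₀¹ ((((1-t)A⁻¹ + t B⁻¹)⁻¹ - A)/t) dt. -/

import Mathlib

open Matrix
open scoped ComplexOrder

attribute [local instance] Matrix.frobeniusNormedAddCommGroup Matrix.frobeniusNormedSpace

/-- Matrix logarithm via the continuous functional calculus (spectral theorem). -/
noncomputable def mlog {n : Type*} [Fintype n] [DecidableEq n] (A : Matrix n n ℂ) :
    Matrix n n ℂ := cfc Real.log A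

/-- Real power of a matrix via the continuous functional calculus (spectral theorem). -/
noncomputable def mpow {n : Type*} [Fintype n] [DecidableEq n] (A : Matrix n n ℂ) (r : ℝ) :
    Matrix n n ℂ := cfc (fun x : ℝ => x ^ r) A

section Aux

variable {n : Type*} [Fintype n] [DecidableEq n]

lemma aux_denom_pos {d : ℝ} (hd : 0 < d) {t : ℝ} (h0 : 0 ≤ t) (h1 : t ≤ 1) :
    0 < (1 - t) * d + t := by
  rcases h0.lt_or_eq with h | h
  · have := mul_nonneg (sub_nonneg.2 h1) hd.le
    linarith
  · rw [← h]; simpa using hd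

lemma aux_scalar_integral {d : ℝ} (hd : 0 < d) :
    ∫ t in (0:ℝ)..1, (d - 1) / ((1 - t) * d + t) = Real.log d := by
  have key : ∀ t ∈ Set.uIcc (0:ℝ) 1,
      HasDerivAt (fun s : ℝ => -Real.log ((1 - s) * d + s)) ((d - 1) / ((1 - t) * d + t)) t := by
    intro t ht
    rw [Set.uIcc_of_le (by norm_num)] at ht
    have hpos := aux_denom_pos hd ht.1 ht.2
    have hu : HasDerivAt (fun s : ℝ => (1 - s) * d + s) (1 - d) t := by
      have := (((hasDerivAt_id t).const_sub 1).mul_const d).add (hasDerivAt_id t)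
      exact this.congr_deriv (by ring)
    have := (hu.log hpos.ne').neg
    exact this.congr_deriv (by ring)
  have hcont : IntervalIntegrable (fun t : ℝ => (d - 1) / ((1 - t) * d + t))
      MeasureTheory.volume 0 1 := by
    apply ContinuousOn.intervalIntegrable
    apply ContinuousOn.div continuousOn_const (by fun_prop)
    intro t ht
    rw [Set.uIcc_of_le (by norm_num)] at ht
    exact (aux_denom_pos hd ht.1 ht.2).ne'
  rw [intervalIntegral.integral_eq_sub_of_hasDerivAt key hcont]
  simp

lemma hcfc_mul {A : Matrix n n ℂ} (hA : A.IsHermitian) (f g : ℝ → ℝ) :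
    hA.cfc f * hA.cfc g = hA.cfc (fun x => f x * g x) := by
  unfold Matrix.IsHermitian.cfc
  simp only [Unitary.conjStarAlgAut_apply]
  have h1 : ∀ M : Matrix n n ℂ,
      (star hA.eigenvectorUnitary : Matrix n n ℂ) * ((hA.eigenvectorUnitary : Matrix n n ℂ) * M)
        = M := by
    intro M
    rw [← mul_assoc, Unitary.star_mul_self_of_mem (SetLike.coe_mem hA.eigenvectorUnitary), one_mul]
  simp only [mul_assoc, h1]
  rw [← mul_assoc (diagonal _), diagonal_mul_diagonal]
  have h2 : (fun i => (RCLike.ofReal ∘ f ∘ hA.eigenvalues) i *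
      ((RCLike.ofReal ∘ g ∘ hA.eigenvalues) i : ℂ)) =
      RCLike.ofReal ∘ (fun x => f x * g x) ∘ hA.eigenvalues := by
    funext i; simp
  rw [h2]

lemma hcfc_congr {A : Matrix n n ℂ} (hA : A.IsHermitian) {f g : ℝ → ℝ}
    (h : ∀ i, f (hA.eigenvalues i) = g (hA.eigenvalues i)) : hA.cfc f = hA.cfc g := by
  unfold Matrix.IsHermitian.cfc
  have : (RCLike.ofReal ∘ f ∘ hA.eigenvalues : n → ℂ) = RCLike.ofReal ∘ g ∘ hA.eigenvalues := by
    funext i; simp [h i]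
  rw [this]

lemma hcfc_one {A : Matrix n n ℂ} (hA : A.IsHermitian) : hA.cfc (fun _ => 1) = 1 := by
  unfold Matrix.IsHermitian.cfc
  simp only [Unitary.conjStarAlgAut_apply]
  have : (diagonal (RCLike.ofReal ∘ (fun _ => (1:ℝ)) ∘ hA.eigenvalues) : Matrix n n ℂ) = 1 := by
    simp [Function.comp_def]
  rw [this, mul_one]
  simpa using Unitary.mul_star_self_of_mem (SetLike.coe_mem hA.eigenvectorUnitary)

lemma hcfc_id {A : Matrix n n ℂ} (hA : A.IsHermitian) : hA.cfc (fun x => x) = A := by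
  rw [Matrix.IsHermitian.cfc]
  exact hA.spectral_theorem.symm

lemma hcfc_herm {A : Matrix n n ℂ} (hA : A.IsHermitian) (f : ℝ → ℝ) :
    (hA.cfc f).IsHermitian := by
  have : IsSelfAdjoint (cfc f A) := cfc_predicate f A
  rw [Matrix.IsHermitian.cfc_eq] at this
  exact this

lemma posdef_conj {B : Matrix n n ℂ} (hB : B.PosDef) (T : Matrix n n ℂ) (hT : IsUnit T) :
    (T * B * Tᴴ).PosDef := by
  exact hB.mul_mul_conjTranspose_same (Matrix.vecMul_injective_iff_isUnit.mpr hT)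

lemma tri_mul {C₁ C₂ C₃ C₄ : Matrix n n ℂ} (h : C₂ * C₃ = 1) (f g : n → ℂ) :
    (C₁ * diagonal f * C₂) * (C₃ * diagonal g * C₄) =
      C₁ * diagonal (fun i => f i * g i) * C₄ := by
  have h1 : C₂ * (C₃ * (diagonal g * C₄)) = diagonal g * C₄ := by
    rw [← mul_assoc, h, one_mul]
  simp only [mul_assoc, h1]
  rw [← mul_assoc (diagonal f), diagonal_mul_diagonal]

lemma tri_smul (r : ℝ) (P D Q : Matrix n n ℂ) : r • (P * D * Q) = P * (r • D) * Q := by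
  rw [mul_smul_comm, smul_mul_assoc]

lemma tri_add (P D₁ D₂ Q : Matrix n n ℂ) :
    P * D₁ * Q + P * D₂ * Q = P * (D₁ + D₂) * Q := by
  rw [mul_add, add_mul]

lemma tri_sub (P D₁ D₂ Q : Matrix n n ℂ) :
    P * D₁ * Q - P * D₂ * Q = P * (D₁ - D₂) * Q := by
  rw [mul_sub, sub_mul]

lemma tri_congr {P Q : Matrix n n ℂ} {f g : n → ℂ} (h : ∀ i, f i = g i) :
    P * diagonal f * Q = P * diagonal g * Q := by
  rw [funext h]

lemma diag_one' : (diagonal (fun _ : n => (1:ℂ)) : Matrix n n ℂ) = 1 := diagonal_one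

/-- The fixed continuous linear map `v ↦ C * diagonal (v ·) * C'`. -/
noncomputable def Phi (C C' : Matrix n n ℂ) : (n → ℝ) →L[ℝ] Matrix n n ℂ :=
  LinearMap.toContinuousLinearMap
  { toFun := fun v => C * diagonal (fun i => (v i : ℂ)) * C'
    map_add' := by
      intro v w
      have : (fun i => (((v + w) i : ℝ) : ℂ)) =
          (fun i => ((v i : ℝ) : ℂ) + ((w i : ℝ) : ℂ)) := by
        funext i; simp
      rw [this, ← diagonal_add, mul_add, add_mul]
    map_smul' := by
      intro r v
      have : (fun i => (((r • v) i : ℝ) : ℂ)) = r • (fun i => ((v i : ℝ) : ℂ)) := by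
        funext i; simp [Complex.real_smul]
      rw [this, diagonal_smul, mul_smul_comm, smul_mul_assoc]
      rfl }

lemma Phi_apply (C C' : Matrix n n ℂ) (v : n → ℝ) :
    Phi C C' v = C * diagonal (fun i => (v i : ℂ)) * C' := rfl

end Aux

theorem stmt_13 {n : Type*} [Fintype n] [DecidableEq n]
    (A B : Matrix n n ℂ) (hA : A.PosDef) (hB : B.PosDef) :
    mpow A (1/2) * mlog (mpow A (-(1/2)) * B * mpow A (-(1/2))) * mpow A (1/2) =
      ∫ t in (0:ℝ)..1, t⁻¹ • (((1 - t) • A⁻¹ + t • B⁻¹)⁻¹ - A) := by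
  have hA1 : A.IsHermitian := hA.1
  set S := mpow A (1/2) with hSdef
  set T := mpow A (-(1/2)) with hTdef
  have hScfc : S = hA1.cfc (fun x : ℝ => x ^ ((1:ℝ)/2)) := hA1.cfc_eq _
  have hTcfc : T = hA1.cfc (fun x : ℝ => x ^ (-(1/2) : ℝ)) := hA1.cfc_eq _
  have he := fun i => hA.eigenvalues_pos i
  have hST : S * T = 1 := by
    rw [hScfc, hTcfc, hcfc_mul,
      hcfc_congr hA1 (g := fun _ => 1) (fun i => by
        rw [← Real.rpow_add (he i)]; norm_num), hcfc_one]
  have hTS : T * S = 1 := mul_eq_one_comm.mp hST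
  have hSS : S * S = A := by
    rw [hScfc, hcfc_mul,
      hcfc_congr hA1 (g := fun x => x) (fun i => by
        rw [← Real.rpow_add (he i)]; norm_num), hcfc_id]
  have hTherm : T.IsHermitian := by rw [hTcfc]; exact hcfc_herm hA1 _
  have hTu : IsUnit T := by
    rw [Matrix.isUnit_iff_isUnit_det]
    exact IsUnit.of_mul_eq_one S.det (by rw [← Matrix.det_mul, hTS, Matrix.det_one])
  set X := T * B * T with hXdef
  have hXpd : X.PosDef := by
    have := posdef_conj hB T hTu
    rwa [hTherm.eq] at this
  have hX : X.IsHermitian := hXpd.1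
  set U : Matrix n n ℂ := (hX.eigenvectorUnitary : Matrix n n ℂ) with hUdef
  set d := hX.eigenvalues with hddef
  have hd := fun i => hXpd.eigenvalues_pos i
  have hUU : U * star U = 1 := Matrix.mem_unitaryGroup_iff.mp hX.eigenvectorUnitary.2
  have hUsU1 : star U * U = 1 := Matrix.mem_unitaryGroup_iff'.mp hX.eigenvectorUnitary.2
  have hSTm : ∀ M : Matrix n n ℂ, S * (T * M) = M := fun M => by
    rw [← mul_assoc, hST, one_mul]
  have hTSm : ∀ M : Matrix n n ℂ, T * (S * M) = M := fun M => by
    rw [← mul_assoc, hTS, one_mul]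
  -- triple-product representations
  have hXtri : X = U * diagonal (fun i => ((d i : ℝ) : ℂ)) * star U := hX.spectral_theorem
  have hAtri : A = (S * U) * diagonal (fun _ => (1:ℂ)) * (star U * S) := by
    rw [diag_one', mul_one,
      show S * U * (star U * S) = S * (U * star U) * S by simp only [mul_assoc], hUU, mul_one, hSS]
  have hBtri : B = (S * U) * diagonal (fun i => ((d i : ℝ) : ℂ)) * (star U * S) := by
    have h0 : S * X * S = B := by
      rw [hXdef]
      simp only [mul_assoc, hSTm, hTS, mul_one]
    rw [← h0, hXtri]
    simp only [mul_assoc]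
  have hAinv : A⁻¹ = (T * U) * diagonal (fun _ => (1:ℂ)) * (star U * T) := by
    apply Matrix.inv_eq_right_inv
    rw [hAtri, tri_mul (by simp only [mul_assoc, hSTm]; exact hUsU1) _ _]
    simp only [mul_one, diag_one',
      show S * U * (star U * T) = S * (U * star U) * T by simp only [mul_assoc], hUU, hST]
  have hdinv : (fun i => ((d i : ℝ) : ℂ) * ((d i : ℝ) : ℂ)⁻¹) = fun _ => (1:ℂ) := by
    funext i
    exact mul_inv_cancel₀ (by exact_mod_cast (hd i).ne')
  have hBinv : B⁻¹ = (T * U) * diagonal (fun i => ((d i : ℝ) : ℂ)⁻¹) * (star U * T) := by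
    apply Matrix.inv_eq_right_inv
    rw [hBtri, tri_mul (by simp only [mul_assoc, hSTm]; exact hUsU1) _ _]
    simp only [hdinv, mul_one, diag_one',
      show S * U * (star U * T) = S * (U * star U) * T by simp only [mul_assoc], hUU, hST]
  -- the integrand in closed form
  have hinteg : ∀ t ∈ Set.Ioc (0:ℝ) 1,
      t⁻¹ • (((1 - t) • A⁻¹ + t • B⁻¹)⁻¹ - A) =
        Phi (S * U) (star U * S) (fun i => (d i - 1) / ((1 - t) * d i + t)) := by
    intro t ht
    have hden : ∀ i, 0 < (1 - t) * d i + t := fun i => aux_denom_pos (hd i) ht.1.le ht.2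
    have hc : ∀ i, (0:ℝ) < (1 - t) + t * (d i)⁻¹ := by
      intro i
      have h1 : (1 - t) + t * (d i)⁻¹ = ((1 - t) * d i + t) * (d i)⁻¹ := by
        rw [add_mul, mul_assoc, mul_inv_cancel₀ (hd i).ne', mul_one]
      rw [h1]
      exact mul_pos (hden i) (inv_pos.2 (hd i))
    have hsum : (1 - t) • A⁻¹ + t • B⁻¹ =
        (T * U) * diagonal (fun i => (((1 - t) + t * (d i)⁻¹ : ℝ) : ℂ)) * (star U * T) := by
      rw [hAinv, hBinv, tri_smul, tri_smul, ← diagonal_smul, ← diagonal_smul, tri_add,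
        diagonal_add]
      refine tri_congr fun i => ?_
      simp only [Pi.smul_apply, Complex.real_smul]
      push_cast
      ring
    have hcinv : (fun i => (((1 - t) + t * (d i)⁻¹ : ℝ) : ℂ) *
        (((1 - t) + t * (d i)⁻¹ : ℝ) : ℂ)⁻¹) = fun _ => (1:ℂ) := by
      funext i
      exact mul_inv_cancel₀ (by exact_mod_cast (hc i).ne')
    have hsuminv : ((1 - t) • A⁻¹ + t • B⁻¹)⁻¹ =
        (S * U) * diagonal (fun i => (((1 - t) + t * (d i)⁻¹ : ℝ) : ℂ)⁻¹) * (star U * S) := by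
      apply Matrix.inv_eq_right_inv
      rw [hsum, tri_mul (by simp only [mul_assoc, hTSm]; exact hUsU1) _ _]
      simp only [hcinv, mul_one, diag_one',
        show T * U * (star U * S) = T * (U * star U) * S by simp only [mul_assoc], hUU, hTS]
    rw [hsuminv, hAtri, tri_sub, diagonal_sub, tri_smul, ← diagonal_smul, Phi_apply]
    refine tri_congr fun i => ?_
    simp only [Pi.smul_apply, Complex.real_smul]
    rw [show ((((1 - t) + t * (d i)⁻¹ : ℝ) : ℂ)⁻¹ - 1)
        = ((((1 - t) + t * (d i)⁻¹)⁻¹ - 1 : ℝ) : ℂ) by push_cast; ring,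
      ← Complex.ofReal_mul, Complex.ofReal_inj]
    have h2 := (hden i).ne'
    have h3 : d i ≠ 0 := (hd i).ne'
    have h4 := ht.1.ne'
    have h5 := (hc i).ne'
    field_simp
    ring
  -- integrability of the scalar family
  have hwint : IntervalIntegrable (fun t : ℝ => (fun i => (d i - 1) / ((1 - t) * d i + t)))
      MeasureTheory.volume 0 1 := by
    apply ContinuousOn.intervalIntegrable
    rw [Set.uIcc_of_le (by norm_num)]
    apply continuousOn_pi.mpr
    intro i
    apply ContinuousOn.div continuousOn_const (by fun_prop)
    intro t ht
    exact (aux_denom_pos (hd i) ht.1 ht.2).ne'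
  have hint2 : (∫ t in (0:ℝ)..1, t⁻¹ • (((1 - t) • A⁻¹ + t • B⁻¹)⁻¹ - A)) =
      ∫ t in (0:ℝ)..1, Phi (S * U) (star U * S) (fun i => (d i - 1) / ((1 - t) * d i + t)) := by
    apply intervalIntegral.integral_congr_ae
    apply MeasureTheory.ae_of_all
    intro t ht'
    exact hinteg t (by rwa [Set.uIoc_of_le (by norm_num : (0:ℝ) ≤ 1)] at ht')
  rw [hint2]; erw [(Phi (S * U) (star U * S)).intervalIntegral_comp_comm hwint]
  have hlogint : (∫ t in (0:ℝ)..1, (fun i => (d i - 1) / ((1 - t) * d i + t)) : n → ℝ) =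
      fun i => Real.log (d i) := by
    funext i
    have h := ((ContinuousLinearMap.proj (R := ℝ) (φ := fun _ : n => ℝ)
      i).intervalIntegral_comp_comm hwint).symm
    simp only [ContinuousLinearMap.proj_apply] at h
    exact h.trans (aux_scalar_integral (hd i))
  rw [hlogint]; erw [Phi_apply]
  unfold mlog
  rw [Matrix.IsHermitian.cfc_eq hX, Matrix.IsHermitian.cfc, Unitary.conjStarAlgAut_apply]
  simp only [mul_assoc]
  rfl
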